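/- If R : Fin n → ℝ is generalized pairwise valid, then the mixed graph G_M(R) contains a strict matching forest, i.e. a matching forest F contained in G_M(R) with h_F(reg i) = 1 for every i : Fin n. -/

import Mathlib

open MeasureTheory ProbabilityTheory

/-- Shannon entropy (in nats) of a random variable. -/
noncomputable def shEntropy {Ω : Type*} [MeasurableSpace Ω] {S : Type*}
    (μ : Measure Ω) (X : Ω → S) : ℝ :=
  ∑' x : S, Real.negMulLog (μ (X ⁻¹' {x})).toReal

/-- Conditional Shannon entropy `H[X | Y]`. -/
noncomputable def shCondEntropy {Ω : Type*} [MeasurableSpace Ω] {S T : Type*}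
    (μ : Measure Ω) (X : Ω → S) (Y : Ω → T) : ℝ :=
  ∑' y : T, (μ (Y ⁻¹' {y})).toReal * shEntropy (ProbabilityTheory.cond μ (Y ⁻¹' {y})) X

/-- The power needed at node `i` (channel gain `γ i`) to support rate `r` (in nats). -/
noncomputable def Qpow {n : ℕ} (γ : Fin n → ℝ) (i : Fin n) (r : ℝ) : ℝ :=
  (Real.exp r - 1) / γ i

/-- The two-dimensional Slepian-Wolf region of the pair of sources `X i`, `X j`. -/
def SWregion {Ω S : Type*} [MeasurableSpace Ω] {n : ℕ}
    (μ : Measure Ω) (X : Fin n → Ω → S) (i j : Fin n) : Set (ℝ × ℝ) :=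
  {q : ℝ × ℝ | q.1 ≥ shCondEntropy μ (X i) (X j) ∧ q.2 ≥ shCondEntropy μ (X j) (X i) ∧
    q.1 + q.2 ≥ shEntropy μ (fun ω => (X i ω, X j ω))}

/-- The Slepian-Wolf region intersected with the peak power constraints. -/
def Sregion {Ω S : Type*} [MeasurableSpace Ω] {n : ℕ}
    (μ : Measure Ω) (X : Fin n → Ω → S) (γ : Fin n → ℝ) (Pmax : ℝ)
    (i j : Fin n) : Set (ℝ × ℝ) :=
  {q : ℝ × ℝ | q ∈ SWregion μ X i j ∧ Qpow γ i q.1 ≤ Pmax ∧ Qpow γ j q.2 ≤ Pmax}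

/-- `X i` is initially decodable under `R` if `R i ≥ H[X i]`, or together with some
other source `X j` the rate pair `(R i, R j)` lies in their Slepian-Wolf region. -/
def InitiallyDecodable {Ω S : Type*} [MeasurableSpace Ω] {n : ℕ}
    (μ : Measure Ω) (X : Fin n → Ω → S) (R : Fin n → ℝ) (i : Fin n) : Prop :=
  R i ≥ shEntropy μ (X i) ∨ ∃ j : Fin n, j ≠ i ∧ (R i, R j) ∈ SWregion μ X i j

/-- The generalized pairwise property: each source is initially decodable, or is
decodable via a chain of sources starting from an initially decodable one. -/
def GenPairwiseProperty {Ω S : Type*} [MeasurableSpace Ω] {n : ℕ}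
    (μ : Measure Ω) (X : Fin n → Ω → S) (R : Fin n → ℝ) : Prop :=
  ∀ i : Fin n, InitiallyDecodable μ X R i ∨
    ∃ (k : ℕ) (s : ℕ → Fin n), 1 ≤ k ∧
      InitiallyDecodable μ X R (s 1) ∧
      (∀ j : ℕ, 2 ≤ j → j ≤ k → R (s j) ≥ shCondEntropy μ (X (s j)) (X (s (j - 1)))) ∧
      R i ≥ shCondEntropy μ (X i) (X (s k))

/-- A rate assignment is generalized pairwise valid if it satisfies the generalized
pairwise property and every node meets the peak power constraint. -/
def GenPairwiseValid {Ω S : Type*} [MeasurableSpace Ω] {n : ℕ}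
    (μ : Measure Ω) (X : Fin n → Ω → S) (γ : Fin n → ℝ) (Pmax : ℝ)
    (R : Fin n → ℝ) : Prop :=
  GenPairwiseProperty μ X R ∧ ∀ i : Fin n, Qpow γ i (R i) ≤ Pmax


/-- A mixed graph on a vertex type `V`: a finite set `E` of undirected edges (with no
loops) and a finite set `A` of directed edges (with no self-loops). -/
structure MixedGraph (V : Type*) where
  E : Finset (Sym2 V)
  A : Finset (V × V)
  no_loops : ∀ e ∈ E, ¬ e.IsDiag
  no_diag : ∀ a ∈ A, a.1 ≠ a.2

/-- `headCount F i` is the number of edges of `F` of which `i` is a head: `i` is a head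
of an undirected edge iff it is one of its endpoints, and of a directed edge iff it is
its target. -/
def MixedGraph.headCount {V : Type*} [DecidableEq V] (F : MixedGraph V) (i : V) : ℕ :=
  (F.E.filter fun e => i ∈ e).card + (F.A.filter fun a => a.2 = i).card

/-- The underlying undirected graph of a mixed graph: `a ~ b` iff `a ≠ b` and the two
vertices are joined by an undirected edge or by a directed edge (in either direction). -/
def MixedGraph.UUG {V : Type*} (F : MixedGraph V) : SimpleGraph V :=
  SimpleGraph.fromRel fun a b => s(a, b) ∈ F.E ∨ (a, b) ∈ F.A

/-- A matching forest: every vertex is the head of at most one edge, no two distinct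
edges share the same underlying unordered vertex pair, and the underlying undirected
graph is acyclic. -/
def MixedGraph.IsMatchingForest {V : Type*} [DecidableEq V] (F : MixedGraph V) : Prop :=
  (∀ i : V, F.headCount i ≤ 1) ∧
  (∀ a b : V, ¬((a, b) ∈ F.A ∧ (b, a) ∈ F.A)) ∧
  (∀ a b : V, s(a, b) ∈ F.E → (a, b) ∉ F.A ∧ (b, a) ∉ F.A) ∧
  F.UUG.IsAcyclic

/-- `F` is a sub-mixed-graph of `G`. -/
def MixedGraph.IsSubgraph {V : Type*} (F G : MixedGraph V) : Prop :=
  F.E ⊆ G.E ∧ F.A ⊆ G.A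

open scoped Classical in
/-- The generalized pairwise property test graph `G_M(R)`: regular vertices `Sum.inl i`
and starred vertices `Sum.inr i`; a directed edge `(star i, reg i)` whenever
`R i ≥ H[X i]`; a directed edge `(reg j, reg i)` (for `j ≠ i`) whenever
`R i ≥ H[X i | X j]`; and an undirected edge `s(reg i, reg j)` (for `i ≠ j`) whenever
`(R i, R j)` lies in the Slepian-Wolf region of the pair. -/
noncomputable def GMgraph {Ω S : Type*} [MeasurableSpace Ω] {n : ℕ}
    (μ : MeasureTheory.Measure Ω) (X : Fin n → Ω → S) (R : Fin n → ℝ) :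
    MixedGraph (Fin n ⊕ Fin n) where
  E := Finset.univ.filter fun e => ∃ i j : Fin n, i ≠ j ∧
    e = s(Sum.inl i, Sum.inl j) ∧ (R i, R j) ∈ SWregion μ X i j
  A := Finset.univ.filter fun a =>
    (∃ i : Fin n, a = (Sum.inr i, Sum.inl i) ∧ R i ≥ shEntropy μ (X i)) ∨
    (∃ i j : Fin n, j ≠ i ∧ a = (Sum.inl j, Sum.inl i) ∧
      R i ≥ shCondEntropy μ (X i) (X j))
  no_loops := by
    intro e he
    simp only [Finset.mem_filter] at he
    obtain ⟨-, i, j, hij, rfl, -⟩ := he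
    simp only [Sym2.mk_isDiag_iff, Sum.inl.injEq]
    exact hij
  no_diag := by
    intro a ha
    simp only [Finset.mem_filter] at ha
    rcases ha.2 with ⟨i, rfl, -⟩ | ⟨i, j, hij, rfl, -⟩
    · simp
    · simp only [ne_eq, Sum.inl.injEq]
      exact hij

section AuxMF

open SimpleGraph
open scoped Classical

lemma exists_second_neighbor {V : Type*} {G : SimpleGraph V} {u x : V}
    (r : G.Walk u x) (hr : r.IsPath) (hlen : 2 ≤ r.length) :
    ∃ y, G.Adj u y ∧ y ≠ x ∧ y ∈ r.support := by
  cases r with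
  | nil => simp at hlen
  | cons h' r' =>
    rename_i y
    refine ⟨y, h', fun hyx => ?_, List.mem_cons_of_mem _ r'.start_mem_support⟩
    subst hyx
    have hp' : r'.IsPath := hr.of_cons
    rw [Walk.isPath_iff_eq_nil] at hp'
    subst hp'
    simp at hlen

lemma isAcyclic_of_parent {V : Type*} [Fintype V] [DecidableEq V] (G : SimpleGraph V)
    (ρ : V → ℕ) (par : V → V)
    (h : ∀ a b, G.Adj a b → (b = par a ∧ ρ b < ρ a) ∨ (a = par b ∧ ρ a < ρ b)) :
    G.IsAcyclic := by
  intro v c hc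
  obtain ⟨u, hu, hmax⟩ := Finset.exists_max_image c.support.toFinset ρ
    ⟨v, List.mem_toFinset.2 c.start_mem_support⟩
  rw [List.mem_toFinset] at hu
  have hmax' : ∀ z ∈ c.support, ρ z ≤ ρ u := fun z hz => hmax z (List.mem_toFinset.2 hz)
  suffices H : ∀ (c' : G.Walk u u), c'.IsCycle → (∀ z ∈ c'.support, ρ z ≤ ρ u) → False by
    refine H (c.rotate u hu) (hc.rotate hu) ?_
    intro z hz
    rw [Walk.support_eq_cons] at hz
    rcases List.mem_cons.mp hz with rfl | hz
    · exact hmax' _ hu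
    · exact hmax' z (List.mem_of_mem_tail (((Walk.support_rotate c u hu).mem_iff).mp hz))
  intro c' hc' hsup
  cases c' with
  | nil => simpa using hc'.three_le_length
  | cons hadj q =>
    rename_i x
    obtain ⟨hq, -⟩ := (Walk.cons_isCycle_iff q hadj).mp hc'
    have hlen3 : 3 ≤ q.length + 1 := by simpa using hc'.three_le_length
    obtain ⟨y, hy, hyx, hysup⟩ := exists_second_neighbor q.reverse hq.reverse
      (by rw [Walk.length_reverse]; omega)
    have hxsup : x ∈ (Walk.cons hadj q).support := by
      rw [Walk.support_cons]
      exact List.mem_cons_of_mem _ q.start_mem_support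
    have hysup' : y ∈ (Walk.cons hadj q).support := by
      rw [Walk.support_cons]
      refine List.mem_cons_of_mem _ ?_
      rw [Walk.support_reverse] at hysup
      exact List.mem_reverse.mp hysup
    have hx : x = par u := by
      rcases h u x hadj with ⟨h1, _⟩ | ⟨_, h2⟩
      · exact h1
      · exact absurd h2 (not_lt.2 (hsup x hxsup))
    have hy' : y = par u := by
      rcases h u y hy with ⟨h1, _⟩ | ⟨_, h2⟩
      · exact h1
      · exact absurd h2 (not_lt.2 (hsup y hysup'))
    exact hyx (hy'.trans hx.symm)

lemma shEntropy_pair_comm {Ω : Type*} [MeasurableSpace Ω] {T U : Type*}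
    (μ : MeasureTheory.Measure Ω) (Y : Ω → T) (Z : Ω → U) :
    shEntropy μ (fun ω => (Y ω, Z ω)) = shEntropy μ (fun ω => (Z ω, Y ω)) := by
  unfold shEntropy
  rw [← Equiv.tsum_eq (Equiv.prodComm T U)
    (fun x => Real.negMulLog (μ ((fun ω => (Z ω, Y ω)) ⁻¹' {x})).toReal)]
  refine tsum_congr fun p => ?_
  have hset : ((fun ω => (Y ω, Z ω)) ⁻¹' {p} : Set Ω)
      = (fun ω => (Z ω, Y ω)) ⁻¹' {(Equiv.prodComm T U) p} := by
    ext ω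
    simp [Prod.ext_iff, and_comm]
  rw [hset]

variable {Ω S : Type*} [MeasurableSpace Ω] {n : ℕ}
  (μ : MeasureTheory.Measure Ω) (X : Fin n → Ω → S) (R : Fin n → ℝ)

lemma SWregion_swap {i j : Fin n} (h : (R i, R j) ∈ SWregion μ X i j) :
    (R j, R i) ∈ SWregion μ X j i := by
  obtain ⟨h1, h2, h3⟩ := h
  refine ⟨h2, h1, ?_⟩
  have := shEntropy_pair_comm μ (X j) (X i)
  simp only [ge_iff_le] at h3 ⊢
  rw [this]
  linarith

/-- The sets of sources decodable within `m` rounds. -/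
def ReachSet : ℕ → Set (Fin n)
  | 0 => {i | InitiallyDecodable μ X R i}
  | (m + 1) => ReachSet m ∪
      {i | ∃ p ∈ ReachSet m, p ≠ i ∧ R i ≥ shCondEntropy μ (X i) (X p)}

lemma reachSet_mono {m m' : ℕ} (h : m ≤ m') : ReachSet μ X R m ⊆ ReachSet μ X R m' := by
  induction h with
  | refl => exact subset_rfl
  | step h ih => exact fun i hi => Set.mem_union_left _ (ih hi)

lemma reach_exists (hGP : GenPairwiseProperty μ X R) (i : Fin n) :
    ∃ m, i ∈ ReachSet μ X R m := by
  rcases hGP i with hD | ⟨k, s, hk, h1, hmid, hlast⟩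
  · exact ⟨0, hD⟩
  · have hchain : ∀ j, 1 ≤ j → j ≤ k → s j ∈ ReachSet μ X R (j - 1) := by
      intro j
      induction j with
      | zero => intro h; exact absurd h (by omega)
      | succ m ih =>
        intro _ hjk
        simp only [Nat.add_sub_cancel]
        rcases Nat.eq_zero_or_pos m with rfl | hm
        · exact h1
        · have hsm : s m ∈ ReachSet μ X R (m - 1) := ih hm (by omega)
          obtain ⟨m', rfl⟩ : ∃ m', m = m' + 1 := ⟨m - 1, by omega⟩
          simp only [Nat.add_sub_cancel] at hsm
          have hcond := hmid (m' + 1 + 1) (by omega) hjk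
          simp only [Nat.add_sub_cancel] at hcond
          by_cases heq : s (m' + 1 + 1) = s (m' + 1)
          · rw [heq]
            exact Set.mem_union_left _ hsm
          · exact Set.mem_union_right _
              ⟨s (m' + 1), hsm, fun h => heq h.symm, hcond⟩
    obtain ⟨k', rfl⟩ : ∃ k', k = k' + 1 := ⟨k - 1, by omega⟩
    have hsk : s (k' + 1) ∈ ReachSet μ X R k' := by
      simpa using hchain (k' + 1) (by omega) le_rfl
    by_cases heq : i = s (k' + 1)
    · exact ⟨k', heq ▸ hsk⟩
    · exact ⟨k' + 1, Set.mem_union_right _ ⟨s (k' + 1), hsk, fun h => heq h.symm, hlast⟩⟩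

/-- Decoding rank: the least number of rounds after which `i` is decodable. -/
noncomputable def rnk (i : Fin n) : ℕ := sInf {m | i ∈ ReachSet μ X R m}

/-- `i` can be decoded immediately on its own. -/
def aCase (i : Fin n) : Prop := R i ≥ shEntropy μ (X i)

/-- `i` is initially decodable. -/
def dCase (i : Fin n) : Prop := InitiallyDecodable μ X R i

open scoped Classical in
/-- The set of admissible Slepian-Wolf partners of `i`. -/
noncomputable def pSet (i : Fin n) : Finset (Fin n) :=
  Finset.univ.filter fun j => j ≠ i ∧ (R i, R j) ∈ SWregion μ X i j

/-- The canonical Slepian-Wolf partner of `i`. -/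
noncomputable def fpart (i : Fin n) : Fin n :=
  if h : (pSet μ X R i).Nonempty then (pSet μ X R i).min' h else i

/-- The canonical parent of a source that is not initially decodable. -/
noncomputable def prnt (i : Fin n) : Fin n :=
  if h : ∃ p : Fin n, p ≠ i ∧ R i ≥ shCondEntropy μ (X i) (X p) ∧
      rnk μ X R p < rnk μ X R i then h.choose else i

/-- `i` belongs to a mutually matched Slepian-Wolf pair. -/
def mCase (i : Fin n) : Prop :=
  dCase μ X R i ∧ ¬ aCase μ X R i ∧ ¬ aCase μ X R (fpart μ X R i) ∧
    fpart μ X R (fpart μ X R i) = i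

open scoped Classical in
/-- The tail of the unique forest edge whose head is the regular vertex `i`. -/
noncomputable def tailV (i : Fin n) : Fin n ⊕ Fin n :=
  if aCase μ X R i then Sum.inr i
  else if dCase μ X R i then Sum.inl (fpart μ X R i)
  else if prnt μ X R i ≠ i then Sum.inl (prnt μ X R i) else Sum.inr i

lemma mem_pSet_iff {i j : Fin n} :
    j ∈ pSet μ X R i ↔ j ≠ i ∧ (R i, R j) ∈ SWregion μ X i j := by
  simp [pSet]

lemma pSet_nonempty {i : Fin n} (hD : dCase μ X R i) (hA : ¬ aCase μ X R i) :
    (pSet μ X R i).Nonempty := by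
  rcases hD with h | ⟨j, hj, hsw⟩
  · exact absurd h hA
  · exact ⟨j, (mem_pSet_iff μ X R).2 ⟨hj, hsw⟩⟩

lemma fpart_mem {i : Fin n} (hD : dCase μ X R i) (hA : ¬ aCase μ X R i) :
    fpart μ X R i ∈ pSet μ X R i := by
  rw [fpart, dif_pos (pSet_nonempty μ X R hD hA)]
  exact Finset.min'_mem _ _

lemma fpart_ne {i : Fin n} (hD : dCase μ X R i) (hA : ¬ aCase μ X R i) :
    fpart μ X R i ≠ i :=
  ((mem_pSet_iff μ X R).1 (fpart_mem μ X R hD hA)).1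

lemma fpart_sw {i : Fin n} (hD : dCase μ X R i) (hA : ¬ aCase μ X R i) :
    (R i, R (fpart μ X R i)) ∈ SWregion μ X i (fpart μ X R i) :=
  ((mem_pSet_iff μ X R).1 (fpart_mem μ X R hD hA)).2

lemma pSet_symm {i j : Fin n} (h : j ∈ pSet μ X R i) : i ∈ pSet μ X R j := by
  rw [mem_pSet_iff] at h ⊢
  exact ⟨h.1.symm, SWregion_swap μ X R h.2⟩

lemma dCase_fpart {i : Fin n} (hD : dCase μ X R i) (hA : ¬ aCase μ X R i) :
    dCase μ X R (fpart μ X R i) :=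
  Or.inr ⟨i, (fpart_ne μ X R hD hA).symm, SWregion_swap μ X R (fpart_sw μ X R hD hA)⟩

lemma fpart_le {i j : Fin n} (h : i ∈ pSet μ X R j) : fpart μ X R j ≤ i := by
  rw [fpart, dif_pos ⟨i, h⟩]
  exact Finset.min'_le _ _ h

lemma mCase_fpart {i : Fin n} (h : mCase μ X R i) : mCase μ X R (fpart μ X R i) := by
  obtain ⟨hD, hA, hAf, hff⟩ := h
  refine ⟨dCase_fpart μ X R hD hA, hAf, ?_, ?_⟩
  · rw [hff]; exact hA
  · rw [hff]

lemma fpart_fpart_lt {i : Fin n} (hD : dCase μ X R i) (hA : ¬ aCase μ X R i)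
    (hm : ¬ mCase μ X R i) (hAf : ¬ aCase μ X R (fpart μ X R i)) :
    fpart μ X R (fpart μ X R i) < i := by
  have h1 : i ∈ pSet μ X R (fpart μ X R i) := pSet_symm μ X R (fpart_mem μ X R hD hA)
  have h2 : fpart μ X R (fpart μ X R i) ≤ i := fpart_le μ X R h1
  exact lt_of_le_of_ne h2 fun he => hm ⟨hD, hA, hAf, he⟩

lemma rnk_eq_zero {i : Fin n} (hD : dCase μ X R i) : rnk μ X R i = 0 :=
  Nat.eq_zero_of_le_zero (Nat.sInf_le hD)

lemma dCase_of_rnk_eq_zero (htot : ∀ j, ∃ m, j ∈ ReachSet μ X R m)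
    {i : Fin n} (h : rnk μ X R i = 0) : dCase μ X R i := by
  have hmem : i ∈ ReachSet μ X R (rnk μ X R i) := Nat.sInf_mem (htot i)
  rw [h] at hmem
  exact hmem

lemma prnt_spec (htot : ∀ j, ∃ m, j ∈ ReachSet μ X R m)
    {i : Fin n} (hD : ¬ dCase μ X R i) :
    prnt μ X R i ≠ i ∧ R i ≥ shCondEntropy μ (X i) (X (prnt μ X R i)) ∧
      rnk μ X R (prnt μ X R i) < rnk μ X R i := by
  have hmem : i ∈ ReachSet μ X R (rnk μ X R i) := Nat.sInf_mem (htot i)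
  have hnz : rnk μ X R i ≠ 0 := by
    intro h
    rw [h] at hmem
    exact hD hmem
  obtain ⟨m, hm⟩ : ∃ m, rnk μ X R i = m + 1 := ⟨rnk μ X R i - 1, by omega⟩
  rw [hm] at hmem
  rcases hmem with hmem | ⟨p, hp, hne, hcond⟩
  · have h5 : rnk μ X R i ≤ m := Nat.sInf_le hmem
    omega
  · have hrp : rnk μ X R p ≤ m := Nat.sInf_le hp
    have hex : ∃ p : Fin n, p ≠ i ∧ R i ≥ shCondEntropy μ (X i) (X p) ∧
        rnk μ X R p < rnk μ X R i := ⟨p, hne, hcond, by omega⟩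
    rw [prnt, dif_pos hex]
    exact ⟨hex.choose_spec.1, hex.choose_spec.2.1, hex.choose_spec.2.2⟩

open scoped Classical in
/-- The strict matching forest extracted from a generalized pairwise valid rate tuple. -/
noncomputable def Fg : MixedGraph (Fin n ⊕ Fin n) where
  E := (Finset.univ.filter fun i => mCase μ X R i).image
        fun i => s(Sum.inl i, Sum.inl (fpart μ X R i))
  A := (Finset.univ.filter fun i => ¬ mCase μ X R i).image
        fun i => (tailV μ X R i, Sum.inl i)
  no_loops := by
    intro e he
    simp only [Finset.mem_image, Finset.mem_filter, Finset.mem_univ, true_and] at he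
    obtain ⟨i, hi, rfl⟩ := he
    simp only [Sym2.mk_isDiag_iff, Sum.inl.injEq]
    exact fun h => fpart_ne μ X R hi.1 hi.2.1 h.symm
  no_diag := by
    intro a ha
    simp only [Finset.mem_image, Finset.mem_filter, Finset.mem_univ, true_and] at ha
    obtain ⟨i, hi, rfl⟩ := ha
    show tailV μ X R i ≠ Sum.inl i
    rw [tailV]
    split_ifs with h1 h2 h3
    · simp
    · simp only [ne_eq, Sum.inl.injEq]
      exact fpart_ne μ X R h2 h1
    · simp only [ne_eq, Sum.inl.injEq]
      exact h3
    · simp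

lemma mem_FgE {e : Sym2 (Fin n ⊕ Fin n)} :
    e ∈ (Fg μ X R).E ↔
      ∃ i, mCase μ X R i ∧ s(Sum.inl i, Sum.inl (fpart μ X R i)) = e := by
  simp [Fg]

lemma mem_FgA {a : (Fin n ⊕ Fin n) × (Fin n ⊕ Fin n)} :
    a ∈ (Fg μ X R).A ↔
      ∃ i, ¬ mCase μ X R i ∧ (tailV μ X R i, Sum.inl i) = a := by
  simp [Fg]

/-- Vertex potential used to certify acyclicity. -/
noncomputable def rhoV : Fin n ⊕ Fin n → ℕ
  | Sum.inl i =>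
      if dCase μ X R i then
        (if aCase μ X R i then 0
         else if mCase μ X R i then
           (if (i : ℕ) < ((fpart μ X R i : Fin n) : ℕ) then 0 else 1)
         else (i : ℕ) + ((fpart μ X R i : Fin n) : ℕ) + 2)
      else 2 * n + 1 + rnk μ X R i
  | Sum.inr _ => 1

/-- Parent map used to certify acyclicity. -/
noncomputable def parV : Fin n ⊕ Fin n → Fin n ⊕ Fin n
  | Sum.inl i =>
      if dCase μ X R i then
        (if aCase μ X R i then Sum.inr i else Sum.inl (fpart μ X R i))
      else Sum.inl (prnt μ X R i)
  | Sum.inr i => Sum.inl i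

lemma rhoV_inl (i : Fin n) : rhoV μ X R (Sum.inl i) =
    if dCase μ X R i then
      (if aCase μ X R i then 0
       else if mCase μ X R i then
         (if (i : ℕ) < ((fpart μ X R i : Fin n) : ℕ) then 0 else 1)
       else (i : ℕ) + ((fpart μ X R i : Fin n) : ℕ) + 2)
    else 2 * n + 1 + rnk μ X R i := rfl

lemma rhoV_inr (i : Fin n) : rhoV μ X R (Sum.inr i) = 1 := rfl

lemma parV_inl (i : Fin n) : parV μ X R (Sum.inl i) =
    if dCase μ X R i then
      (if aCase μ X R i then Sum.inr i else Sum.inl (fpart μ X R i))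
    else Sum.inl (prnt μ X R i) := rfl

lemma parV_inr (i : Fin n) : parV μ X R (Sum.inr i) = Sum.inl i := rfl

lemma rhoV_le_of_dCase {i : Fin n} (hD : dCase μ X R i) :
    rhoV μ X R (Sum.inl i) ≤ 2 * n := by
  have h1 : (i : ℕ) < n := i.isLt
  have h2 : ((fpart μ X R i : Fin n) : ℕ) < n := (fpart μ X R i).isLt
  rw [rhoV_inl, if_pos hD]
  split_ifs <;> omega

end AuxMF



/-- If `R` is generalized pairwise valid, then `G_M(R)` contains a strict matching
forest: a matching forest in which every regular vertex is the head of exactly one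
edge. -/
theorem genPairwiseValid_exists_strictMatchingForest
    {Ω S : Type*} [MeasurableSpace Ω] [MeasurableSpace S] [MeasurableSingletonClass S]
    (μ : MeasureTheory.Measure Ω) [MeasureTheory.IsProbabilityMeasure μ]
    {n : ℕ} (hn : 1 ≤ n)
    (X : Fin n → Ω → S) (hX : ∀ i, Measurable (X i))
    (hfin : ∀ i, (Set.range (X i)).Finite)
    (γ : Fin n → ℝ) (hγ : ∀ i, 0 < γ i) (Pmax : ℝ) (hP : 0 < Pmax)
    (R : Fin n → ℝ) (hR : GenPairwiseValid μ X γ Pmax R) :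
    ∃ F : MixedGraph (Fin n ⊕ Fin n), F.IsSubgraph (GMgraph μ X R) ∧
      F.IsMatchingForest ∧ ∀ i : Fin n, F.headCount (Sum.inl i) = 1 := by
  classical
  obtain ⟨hGP, hQ⟩ := hR
  have htot : ∀ j, ∃ m, j ∈ ReachSet μ X R m := reach_exists μ X R hGP
  have hcE : ∀ i : Fin n, ((Fg μ X R).E.filter fun e => Sum.inl i ∈ e)
      = if mCase μ X R i then {s(Sum.inl i, Sum.inl (fpart μ X R i))} else ∅ := by
    intro i
    split_ifs with hm
    · ext e
      simp only [Finset.mem_filter, mem_FgE, Finset.mem_singleton]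
      constructor
      · rintro ⟨⟨j, hj, rfl⟩, hmem⟩
        rw [Sym2.mem_iff] at hmem
        rcases hmem with h | h
        · obtain rfl := Sum.inl.inj h
          rfl
        · obtain rfl := Sum.inl.inj h
          rw [hj.2.2.2, Sym2.eq_swap]
      · rintro rfl
        exact ⟨⟨i, hm, rfl⟩, by simp⟩
    · ext e
      simp only [Finset.mem_filter, mem_FgE, Finset.notMem_empty, iff_false, not_and]
      rintro ⟨j, hj, rfl⟩ hmem
      rw [Sym2.mem_iff] at hmem
      rcases hmem with h | h
      · obtain rfl := Sum.inl.inj h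
        exact hm hj
      · obtain rfl := Sum.inl.inj h
        exact hm (mCase_fpart μ X R hj)
  have hcA : ∀ i : Fin n, ((Fg μ X R).A.filter fun a => a.2 = Sum.inl i)
      = if mCase μ X R i then ∅ else {(tailV μ X R i, Sum.inl i)} := by
    intro i
    split_ifs with hm
    · ext a
      simp only [Finset.mem_filter, mem_FgA, Finset.notMem_empty, iff_false, not_and]
      rintro ⟨j, hj, rfl⟩ h2
      obtain rfl := Sum.inl.inj h2
      exact hj hm
    · ext a
      simp only [Finset.mem_filter, mem_FgA, Finset.mem_singleton]
      constructor
      · rintro ⟨⟨j, hj, rfl⟩, h2⟩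
        obtain rfl := Sum.inl.inj h2
        rfl
      · rintro rfl
        exact ⟨⟨i, hm, rfl⟩, rfl⟩
  have hhead : ∀ i : Fin n, (Fg μ X R).headCount (Sum.inl i) = 1 := by
    intro i
    rw [MixedGraph.headCount, hcE i, hcA i]
    split_ifs <;> simp
  have hheadr : ∀ i : Fin n, (Fg μ X R).headCount (Sum.inr i) = 0 := by
    intro i
    rw [MixedGraph.headCount]
    have h1 : ((Fg μ X R).E.filter fun e => Sum.inr i ∈ e) = ∅ := by
      ext e
      simp only [Finset.mem_filter, mem_FgE, Finset.notMem_empty, iff_false, not_and]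
      rintro ⟨j, hj, rfl⟩ hmem
      rw [Sym2.mem_iff] at hmem
      rcases hmem with h | h <;> simp at h
    have h2 : ((Fg μ X R).A.filter fun a => a.2 = Sum.inr i) = ∅ := by
      ext a
      simp only [Finset.mem_filter, mem_FgA, Finset.notMem_empty, iff_false, not_and]
      rintro ⟨j, hj, rfl⟩ h2
      simp at h2
    rw [h1, h2]
    simp
  have hdecode : ∀ p q : Fin n, tailV μ X R p = Sum.inl q →
      (dCase μ X R p ∧ ¬ aCase μ X R p ∧ fpart μ X R p = q) ∨
      (¬ dCase μ X R p ∧ prnt μ X R p = q) := by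
    intro p q ht
    rw [tailV] at ht
    split_ifs at ht with h1 h2 h3
    · exact Or.inl ⟨h2, h1, Sum.inl.inj ht⟩
    · exact Or.inr ⟨h2, Sum.inl.inj ht⟩
  refine ⟨Fg μ X R, ⟨?_, ?_⟩, ⟨?_, ?_, ?_, ?_⟩, hhead⟩
  · -- undirected edges are in GM
    intro e he
    rw [mem_FgE μ X R] at he
    obtain ⟨i, hm, he⟩ := he
    subst he
    have hmem := fpart_mem μ X R hm.1 hm.2.1
    rw [mem_pSet_iff] at hmem
    simp only [GMgraph, Finset.mem_filter, Finset.mem_univ, true_and]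
    exact ⟨i, fpart μ X R i, Ne.symm hmem.1, rfl, hmem.2⟩
  · -- directed edges are in GM
    intro a ha
    rw [mem_FgA μ X R] at ha
    obtain ⟨i, hm, ha⟩ := ha
    subst ha
    simp only [GMgraph, Finset.mem_filter, Finset.mem_univ, true_and]
    rw [tailV]
    split_ifs with h1 h2 h3
    · exact Or.inl ⟨i, rfl, h1⟩
    · exact Or.inr ⟨i, fpart μ X R i, fpart_ne μ X R h2 h1, rfl,
        (fpart_sw μ X R h2 h1).1⟩
    · exact Or.inr ⟨i, prnt μ X R i, h3, rfl, (prnt_spec μ X R htot h2).2.1⟩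
    · exact absurd (prnt_spec μ X R htot h2).1 h3
  · -- head counts at most one
    intro v
    cases v with
    | inl i => rw [hhead i]
    | inr i => rw [hheadr i]; omega
  · -- no antiparallel directed edges
    intro a b hab
    obtain ⟨h1, h2⟩ := hab
    rw [mem_FgA μ X R] at h1 h2
    obtain ⟨i, hmi, hi⟩ := h1
    obtain ⟨j, hmj, hj⟩ := h2
    injection hi with hi1 hi2
    injection hj with hj1 hj2
    have hti : tailV μ X R i = Sum.inl j := by rw [hi1, ← hj2]
    have htj : tailV μ X R j = Sum.inl i := by rw [hj1, ← hi2]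
    rcases hdecode i j hti with ⟨hDi, hAi, hfi⟩ | ⟨hDi, hpi⟩ <;>
      rcases hdecode j i htj with ⟨hDj, hAj, hfj⟩ | ⟨hDj, hpj⟩
    · exact hmi ⟨hDi, hAi, by rw [hfi]; exact hAj, by rw [hfi, hfj]⟩
    · exact hDj (by rw [← hfi]; exact dCase_fpart μ X R hDi hAi)
    · exact hDi (by rw [← hfj]; exact dCase_fpart μ X R hDj hAj)
    · have p1 := (prnt_spec μ X R htot hDi).2.2
      have p2 := (prnt_spec μ X R htot hDj).2.2
      rw [hpi] at p1
      rw [hpj] at p2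
      omega
  · -- undirected and directed edges use different pairs
    intro a b he
    rw [mem_FgE μ X R] at he
    obtain ⟨i, hmi, he⟩ := he
    rw [Sym2.eq_iff] at he
    constructor
    · intro hA
      rw [mem_FgA μ X R] at hA
      obtain ⟨j, hmj, hj⟩ := hA
      injection hj with hj1 hj2
      rcases he with ⟨h1, h2⟩ | ⟨h1, h2⟩
      · obtain rfl := Sum.inl.inj (hj2.trans h2.symm)
        exact hmj (mCase_fpart μ X R hmi)
      · obtain rfl := Sum.inl.inj (hj2.trans h1.symm)
        exact hmj hmi
    · intro hA
      rw [mem_FgA μ X R] at hA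
      obtain ⟨j, hmj, hj⟩ := hA
      injection hj with hj1 hj2
      rcases he with ⟨h1, h2⟩ | ⟨h1, h2⟩
      · obtain rfl := Sum.inl.inj (hj2.trans h1.symm)
        exact hmj hmi
      · obtain rfl := Sum.inl.inj (hj2.trans h2.symm)
        exact hmj (mCase_fpart μ X R hmi)
  · -- acyclicity
    apply isAcyclic_of_parent _ (rhoV μ X R) (parV μ X R)
    have hEcase : ∀ a b, s(a, b) ∈ (Fg μ X R).E →
        (b = parV μ X R a ∧ rhoV μ X R b < rhoV μ X R a) ∨
        (a = parV μ X R b ∧ rhoV μ X R a < rhoV μ X R b) := by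
      intro a b h
      rw [mem_FgE μ X R] at h
      obtain ⟨i, hmi, he⟩ := h
      have hmf := mCase_fpart μ X R hmi
      obtain ⟨hDi, hAi, hAf, hff⟩ := hmi
      have hDf : dCase μ X R (fpart μ X R i) := dCase_fpart μ X R hDi hAi
      have hne : ((fpart μ X R i) : ℕ) ≠ (i : ℕ) := by
        intro h'
        exact fpart_ne μ X R hDi hAi (Fin.val_injective h')
      have hri : rhoV μ X R (Sum.inl i)
          = if (i : ℕ) < ((fpart μ X R i) : ℕ) then 0 else 1 := by
        rw [rhoV_inl, if_pos hDi, if_neg hAi, if_pos ⟨hDi, hAi, hAf, hff⟩]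
      have hrf : rhoV μ X R (Sum.inl (fpart μ X R i))
          = if ((fpart μ X R i) : ℕ) < (i : ℕ) then 0 else 1 := by
        rw [rhoV_inl, if_pos hDf, if_neg hAf, if_pos hmf, hff]
      have hpi : parV μ X R (Sum.inl i) = Sum.inl (fpart μ X R i) := by
        rw [parV_inl, if_pos hDi, if_neg hAi]
      have hpf : parV μ X R (Sum.inl (fpart μ X R i)) = Sum.inl i := by
        rw [parV_inl, if_pos hDf, if_neg hAf, hff]
      rw [Sym2.eq_iff] at he
      rcases he with ⟨h1, h2⟩ | ⟨h1, h2⟩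
      · subst h1
        subst h2
        rcases Nat.lt_or_ge (i : ℕ) ((fpart μ X R i) : ℕ) with hlt | hge
        · have hnlt : ¬ ((fpart μ X R i) : ℕ) < (i : ℕ) := by omega
          refine Or.inr ⟨hpf.symm, ?_⟩
          rw [hri, hrf, if_pos hlt, if_neg hnlt]
          omega
        · have hlt' : ((fpart μ X R i) : ℕ) < (i : ℕ) := lt_of_le_of_ne hge hne
          have hnlt : ¬ (i : ℕ) < ((fpart μ X R i) : ℕ) := by omega
          refine Or.inl ⟨hpi.symm, ?_⟩
          rw [hri, hrf, if_neg hnlt, if_pos hlt']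
          omega
      · subst h1
        subst h2
        rcases Nat.lt_or_ge (i : ℕ) ((fpart μ X R i) : ℕ) with hlt | hge
        · have hnlt : ¬ ((fpart μ X R i) : ℕ) < (i : ℕ) := by omega
          refine Or.inl ⟨hpf.symm, ?_⟩
          rw [hri, hrf, if_pos hlt, if_neg hnlt]
          omega
        · have hlt' : ((fpart μ X R i) : ℕ) < (i : ℕ) := lt_of_le_of_ne hge hne
          have hnlt : ¬ (i : ℕ) < ((fpart μ X R i) : ℕ) := by omega
          refine Or.inr ⟨hpi.symm, ?_⟩
          rw [hri, hrf, if_neg hnlt, if_pos hlt']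
          omega
    have hAcase : ∀ a b, (a, b) ∈ (Fg μ X R).A →
        (b = parV μ X R a ∧ rhoV μ X R b < rhoV μ X R a) ∨
        (a = parV μ X R b ∧ rhoV μ X R a < rhoV μ X R b) := by
      intro a b h
      rw [mem_FgA μ X R] at h
      obtain ⟨i, hmi, he⟩ := h
      injection he with he1 he2
      subst he1
      subst he2
      rw [tailV]
      split_ifs with h1 h2 h3
      · have hD : dCase μ X R i := Or.inl h1
        refine Or.inl ⟨?_, ?_⟩
        · rw [parV_inr]
        · rw [rhoV_inr, rhoV_inl, if_pos hD, if_pos h1]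
          omega
      · refine Or.inr ⟨?_, ?_⟩
        · rw [parV_inl, if_pos h2, if_neg h1]
        · have hDf := dCase_fpart μ X R h2 h1
          have hb : rhoV μ X R (Sum.inl i)
              = (i : ℕ) + ((fpart μ X R i) : ℕ) + 2 := by
            rw [rhoV_inl, if_pos h2, if_neg h1, if_neg hmi]
          rw [hb]
          by_cases hAf : aCase μ X R (fpart μ X R i)
          · rw [rhoV_inl, if_pos hDf, if_pos hAf]
            omega
          · by_cases hmf : mCase μ X R (fpart μ X R i)
            · rw [rhoV_inl, if_pos hDf, if_neg hAf, if_pos hmf]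
              split_ifs <;> omega
            · have hlt := fpart_fpart_lt μ X R h2 h1 hmi hAf
              rw [Fin.lt_def] at hlt
              rw [rhoV_inl, if_pos hDf, if_neg hAf, if_neg hmf]
              omega
      · refine Or.inr ⟨?_, ?_⟩
        · rw [parV_inl, if_neg h2]
        · have hspec := prnt_spec μ X R htot h2
          have hb : rhoV μ X R (Sum.inl i) = 2 * n + 1 + rnk μ X R i := by
            rw [rhoV_inl, if_neg h2]
          rw [hb]
          by_cases hDp : dCase μ X R (prnt μ X R i)
          · have := rhoV_le_of_dCase μ X R hDp
            omega
          · rw [rhoV_inl, if_neg hDp]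
            have := hspec.2.2
            omega
      · exact absurd (prnt_spec μ X R htot h2).1 h3
    intro a b hadj
    simp only [MixedGraph.UUG, SimpleGraph.fromRel_adj] at hadj
    obtain ⟨hne, hrel⟩ := hadj
    rcases hrel with (hE | hA) | (hE | hA)
    · exact hEcase a b hE
    · exact hAcase a b hA
    · exact hEcase a b (by rw [Sym2.eq_swap]; exact hE)
    · exact (hAcase b a hA).symm
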